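/- Farkas' lemma: For a real m×n matrix A with columns a₁,…,aₙ and a vector b ∈ ℝᵐ, exactly one of the following holds: (1) there exists x ∈ ℝ₊ⁿ with Ax = b; (2) there exists y ∈ ℝᵐ with ⟨aᵢ, y⟩ ≥ 0 for all i = 1,…,n and ⟨b, y⟩ < 0. -/

import Mathlib

open scoped RealInnerProductSpace

private theorem conic_caratheodory {E : Type*} [AddCommGroup E] [Module ℝ E]
    {n : ℕ} (a : Fin n → E) :
    ∀ (k : ℕ) (x : Fin n → ℝ), (∀ i, 0 ≤ x i) →
      (Finset.univ.filter fun i => x i ≠ 0).card ≤ k →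
      ∃ s : Finset (Fin n), (LinearIndependent ℝ fun i : s => a i) ∧
        ∃ y : Fin n → ℝ, (∀ i, 0 ≤ y i) ∧ (∀ i ∉ s, y i = 0) ∧
          ∑ i, y i • a i = ∑ i, x i • a i := by
  intro k
  induction k with
  | zero =>
    intro x hx hcard
    refine ⟨∅, linearIndependent_empty_type, x, hx, ?_, rfl⟩
    intro i _
    by_contra h
    have : i ∈ Finset.univ.filter fun i => x i ≠ 0 := by simp [h]
    simp [Finset.card_eq_zero.mp (Nat.le_zero.mp hcard)] at this
  | succ k ih =>
    intro x hx hcard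
    classical
    set s := Finset.univ.filter fun i => x i ≠ 0 with hs
    by_cases hli : LinearIndependent ℝ fun i : s => a i
    · exact ⟨s, hli, x, hx, fun i hi => by simpa [hs] using hi, rfl⟩
    obtain ⟨g, hg0, j, hj⟩ := Fintype.not_linearIndependent_iff.mp hli
    have key : ∃ d : Fin n → ℝ, (∀ i, i ∉ s → d i = 0) ∧
        (∑ i, d i • a i = 0) ∧ ∃ i, 0 < d i := by
      set d : Fin n → ℝ := fun i => if h : i ∈ s then g ⟨i, h⟩ else 0 with hd
      have hzero : ∀ i, i ∉ s → d i = 0 := fun i hi => by simp [hd, hi]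
      have hdsum : ∑ i, d i • a i = 0 := by
        rw [← Finset.sum_subset (Finset.subset_univ s)
          (fun i _ hi => by simp [hzero i hi])]
        rw [← Finset.sum_attach s (fun i => d i • a i)]
        simpa [hd] using hg0
      rcases lt_or_gt_of_ne hj with h | h
      · refine ⟨-d, fun i hi => by simp [hzero i hi], by
          simpa [neg_smul, Finset.sum_neg_distrib] using congrArg Neg.neg hdsum, j, ?_⟩
        simp only [Pi.neg_apply, hd, j.2, dif_pos]
        simpa using h
      · exact ⟨d, hzero, hdsum, j, by simpa [hd, j.2] using h⟩
    obtain ⟨d, hdz, hdsum, i₁, hi₁⟩ := key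
    set T := s.filter (fun i => 0 < d i) with hT
    have hi₁s : i₁ ∈ s := by by_contra h; rw [hdz i₁ h] at hi₁; exact lt_irrefl 0 hi₁
    have hTne : T.Nonempty := ⟨i₁, by simp [hT, hi₁s, hi₁]⟩
    obtain ⟨i₀, hi₀T, hmin⟩ := Finset.exists_min_image T (fun i => x i / d i) hTne
    have hdi₀ : 0 < d i₀ := (Finset.mem_filter.mp hi₀T).2
    have hi₀s : i₀ ∈ s := (Finset.mem_filter.mp hi₀T).1
    set t := x i₀ / d i₀ with ht
    have ht0 : 0 ≤ t := div_nonneg (hx i₀) hdi₀.le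
    set x' : Fin n → ℝ := fun i => x i - t * d i with hx'
    have hx'nn : ∀ i, 0 ≤ x' i := by
      intro i
      rcases le_or_gt (d i) 0 with h | h
      · have : t * d i ≤ 0 := mul_nonpos_of_nonneg_of_nonpos ht0 h
        simp only [hx']; linarith [hx i]
      · have hiT : i ∈ T := by
          refine Finset.mem_filter.mpr ⟨?_, h⟩
          by_contra hns; rw [hdz i hns] at h; exact lt_irrefl 0 h
        have := hmin i hiT
        rw [div_le_div_iff₀ hdi₀ h] at this
        simp only [hx', ht]
        rw [div_mul_eq_mul_div, sub_nonneg, div_le_iff₀ hdi₀]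
        linarith
    have hx'sum : ∑ i, x' i • a i = ∑ i, x i • a i := by
      simp only [hx', sub_smul, Finset.sum_sub_distrib, mul_smul]
      rw [← Finset.smul_sum, hdsum, smul_zero, sub_zero]
    have hx'i₀ : x' i₀ = 0 := by
      simp only [hx', ht]
      field_simp
      simp
    have hsub : (Finset.univ.filter fun i => x' i ≠ 0) ⊆ s.erase i₀ := by
      intro i hi
      simp only [Finset.mem_filter] at hi
      refine Finset.mem_erase.mpr ⟨?_, ?_⟩
      · rintro rfl; exact hi.2 hx'i₀
      · by_contra h
        have hxi : x i = 0 := by simpa [hs] using h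
        exact hi.2 (by simp [hx', hxi, hdz i h])
    have hcard' : (Finset.univ.filter fun i => x' i ≠ 0).card ≤ k := by
      calc (Finset.univ.filter fun i => x' i ≠ 0).card
          ≤ (s.erase i₀).card := Finset.card_le_card hsub
        _ = s.card - 1 := Finset.card_erase_of_mem hi₀s
        _ ≤ k := by omega
    obtain ⟨s', hli', y, hy1, hy2, hy3⟩ := ih x' hx'nn hcard'
    exact ⟨s', hli', y, hy1, hy2, hy3.trans hx'sum⟩

theorem farkas_lemma (m n : ℕ) (a : Fin n → EuclideanSpace ℝ (Fin m))
    (b : EuclideanSpace ℝ (Fin m)) :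
    Xor' (∃ x : Fin n → ℝ, (∀ i, 0 ≤ x i) ∧ ∑ i, x i • a i = b)
      (∃ y : EuclideanSpace ℝ (Fin m), (∀ i, 0 ≤ ⟪a i, y⟫) ∧ ⟪b, y⟫ < 0) := by
  classical
  have hnotboth : ¬ ((∃ x : Fin n → ℝ, (∀ i, 0 ≤ x i) ∧ ∑ i, x i • a i = b) ∧
      (∃ y : EuclideanSpace ℝ (Fin m), (∀ i, 0 ≤ ⟪a i, y⟫) ∧ ⟪b, y⟫ < 0)) := by
    rintro ⟨⟨x, hx, hxb⟩, ⟨y, hy, hby⟩⟩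
    have : (0:ℝ) ≤ ⟪b, y⟫ := by
      rw [← hxb, sum_inner]
      refine Finset.sum_nonneg fun i _ => ?_
      rw [real_inner_smul_left]
      exact mul_nonneg (hx i) (hy i)
    linarith
  by_cases h1 : ∃ x : Fin n → ℝ, (∀ i, 0 ≤ x i) ∧ ∑ i, x i • a i = b
  · exact Or.inl ⟨h1, fun h2 => hnotboth ⟨h1, h2⟩⟩
  · refine Or.inr ⟨?_, h1⟩
    -- build the convex cone
    set C : ConvexCone ℝ (EuclideanSpace ℝ (Fin m)) :=
      { carrier := {v | ∃ x : Fin n → ℝ, (∀ i, 0 ≤ x i) ∧ ∑ i, x i • a i = v}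
        smul_mem' := by
          rintro c hc v ⟨x, hx, rfl⟩
          exact ⟨fun i => c * x i, fun i => mul_nonneg hc.le (hx i), by
            simp [mul_smul, Finset.smul_sum]⟩
        add_mem' := by
          rintro v ⟨x, hx, rfl⟩ w ⟨x', hx', rfl⟩
          exact ⟨x + x', fun i => add_nonneg (hx i) (hx' i), by
            simp [add_smul, Finset.sum_add_distrib]⟩ } with hC
    have hCne : (C : Set (EuclideanSpace ℝ (Fin m))).Nonempty :=
      ⟨0, 0, fun i => le_refl 0, by simp⟩
    have hCclosed : IsClosed (C : Set (EuclideanSpace ℝ (Fin m))) := by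
      have heq : (C : Set (EuclideanSpace ℝ (Fin m))) =
          ⋃ s ∈ {s : Finset (Fin n) | LinearIndependent ℝ fun i : s => a i},
            (fun x : ↥s → ℝ => ∑ i, x i • a i) ''
              {x | ∀ i, 0 ≤ x i} := by
        ext v
        simp only [Set.mem_iUnion, Set.mem_image, Set.mem_setOf_eq, SetLike.mem_coe]
        constructor
        · rintro ⟨x, hx, rfl⟩
          obtain ⟨s, hli, y, hy1, hy2, hy3⟩ :=
            conic_caratheodory a (Finset.univ.filter fun i => x i ≠ 0).card x hx le_rfl
          refine ⟨s, hli, fun i => y i, fun i => hy1 i, ?_⟩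
          rw [← hy3]
          rw [← Finset.sum_subset (Finset.subset_univ s)
            (fun i _ hi => by rw [hy2 i hi, zero_smul])]
          rw [← Finset.sum_attach s (fun i => y i • a i)]
          rfl
        · rintro ⟨s, _, x, hx, rfl⟩
          refine ⟨fun i => if h : i ∈ s then x ⟨i, h⟩ else 0, fun i => ?_, ?_⟩
          · by_cases h : i ∈ s
            · simpa [h] using hx ⟨i, h⟩
            · simp [h]
          · rw [← Finset.sum_subset (Finset.subset_univ s)
              (fun i _ hi => by simp [hi])]
            rw [← Finset.sum_attach s
              (fun i => (if h : i ∈ s then x ⟨i, h⟩ else 0) • a i)]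
            congr 1
            ext i
            simp [i.2]
      rw [heq]
      refine Set.Finite.isClosed_biUnion (Set.toFinite _) ?_
      rintro s hs
      have hcl : IsClosed {x : ↥s → ℝ | ∀ i, 0 ≤ x i} := by
        have : {x : ↥s → ℝ | ∀ i, 0 ≤ x i} =
            ⋂ i, {x | 0 ≤ x i} := by ext x; simp
        rw [this]
        exact isClosed_iInter fun i => isClosed_le continuous_const (continuous_apply i)
      have hinj : LinearMap.ker (∑ i : ↥s,
          (LinearMap.smulRight (LinearMap.proj i : (↥s → ℝ) →ₗ[ℝ] ℝ)
            (a i))) = ⊥ := by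
        rw [LinearMap.ker_eq_bot']
        intro x hxz
        simp only [FunLike.coe_sum, Finset.sum_apply, LinearMap.smulRight_apply,
          LinearMap.proj_apply] at hxz
        have := linearIndependent_iff'.mp hs Finset.univ x (by
          simpa using hxz)
        funext i
        exact this i (Finset.mem_univ i)
      have := (LinearMap.isClosedEmbedding_of_injective hinj).isClosedMap _ hcl
      convert this using 2
      ext x
      simp [LinearMap.smulRight_apply]
    obtain ⟨y, hy1, hy2⟩ :=
      ProperCone.hyperplane_separation'
        (⟨C.toPointedCone ⟨0, fun i => le_refl 0, by simp⟩, hCclosed⟩ : ProperCone ℝ _)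
        (x₀ := b) (by intro hb; exact h1 hb)
    refine ⟨y, fun i => ?_, ?_⟩
    · refine hy1 (a i) ⟨fun j => if j = i then 1 else 0, fun j => by positivity, ?_⟩
      simp [Finset.sum_ite_eq']
    · exact hy2
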